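/- arXiv:2512.16258 — 2 statements merged into one kernel-verified Lean document; each statement's English description precedes it below -/
import Mathlib

section
/- Extra symmetry for equal diffusivities d₂ = d₃ (Theorem 2, finite form of the operator (v+w)∂_w): Suppose d₂ = d₃ and (u, v, w) solves the system S(Ψ; d₁,d₂,d₂; k) on an open set Ω ⊆ ℝ³. Then for every real ε, the triple (u, v, e^ε·w + (e^ε − 1)·v) also solves S(Ψ; d₁,d₂,d₂; k) on Ω. -/
/-- Partial derivative with respect to `t` of a function of `(t,x,y)`. -/
noncomputable def pdT (f : ℝ × ℝ × ℝ → ℝ) (p : ℝ × ℝ × ℝ) : ℝ := fderiv ℝ f p (1, 0, 0)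
/-- Partial derivative with respect to `x`. -/
noncomputable def pdX (f : ℝ × ℝ × ℝ → ℝ) (p : ℝ × ℝ × ℝ) : ℝ := fderiv ℝ f p (0, 1, 0)
/-- Partial derivative with respect to `y`. -/
noncomputable def pdY (f : ℝ × ℝ × ℝ → ℝ) (p : ℝ × ℝ × ℝ) : ℝ := fderiv ℝ f p (0, 0, 1)
/-- `Ψ_x` for a function of `(x,y)`. -/
noncomputable def psiX (Ψ : ℝ × ℝ → ℝ) (q : ℝ × ℝ) : ℝ := fderiv ℝ Ψ q (1, 0)
/-- `Ψ_y` for a function of `(x,y)`. -/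
noncomputable def psiY (Ψ : ℝ × ℝ → ℝ) (q : ℝ × ℝ) : ℝ := fderiv ℝ Ψ q (0, 1)

/-- `(u,v,w)` solves the convective Lotka–Volterra system `S(Ψ; d₁,d₂,d₃; k)` on `Ω`. -/
def SolvesS (Ψ : ℝ × ℝ → ℝ) (d₁ d₂ d₃ k : ℝ) (u v w : ℝ × ℝ × ℝ → ℝ)
    (Ω : Set (ℝ × ℝ × ℝ)) : Prop :=
  ∀ p ∈ Ω,
    (pdT u p + psiY Ψ p.2 * pdX u p - psiX Ψ p.2 * pdY u p
      = d₁ * (pdX (pdX u) p + pdY (pdY u) p) - k * u p * v p) ∧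
    (pdT v p + psiY Ψ p.2 * pdX v p - psiX Ψ p.2 * pdY v p
      = d₂ * (pdX (pdX v) p + pdY (pdY v) p) - k * u p * v p) ∧
    (pdT w p + psiY Ψ p.2 * pdX w p - psiX Ψ p.2 * pdY w p
      = d₃ * (pdX (pdX w) p + pdY (pdY w) p) + k * u p * v p)

lemma pd_lin (f g : ℝ × ℝ × ℝ → ℝ) (a b : ℝ) (hf : Differentiable ℝ f)
    (hg : Differentiable ℝ g) (vv : ℝ × ℝ × ℝ) :
    (fun p => fderiv ℝ (fun q => a * f q + b * g q) p vv)
      = fun p => a * fderiv ℝ f p vv + b * fderiv ℝ g p vv := by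
  funext p
  rw [fderiv_fun_add ((hf p).const_mul a) ((hg p).const_mul b),
    fderiv_const_mul (hf p), fderiv_const_mul (hg p)]
  simp

lemma diff_pd (f : ℝ × ℝ × ℝ → ℝ) (hf : ContDiff ℝ 2 f) (vv : ℝ × ℝ × ℝ) :
    Differentiable ℝ (fun p => fderiv ℝ f p vv) := by
  have h1 : ContDiff ℝ 1 (fderiv ℝ f) := hf.fderiv_right (by norm_num)
  exact (h1.differentiable one_ne_zero).clm_apply (differentiable_const _)

/-- Extra symmetry for equal diffusivities `d₂ = d₃` (finite form of `(v+w)∂_w`):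
if `(u,v,w)` solves `S(Ψ; d₁,d₂,d₂; k)` on an open set `Ω`, then for every real `ε`
the triple `(u, v, e^ε·w + (e^ε − 1)·v)` also solves `S(Ψ; d₁,d₂,d₂; k)` on `Ω`. -/
theorem extra_symmetry_d2_eq_d3
    (d₁ d₂ k : ℝ) (Ψ : ℝ × ℝ → ℝ) (hΨ : ContDiff ℝ 1 Ψ)
    (Ω : Set (ℝ × ℝ × ℝ)) (hΩ : IsOpen Ω)
    (u v w : ℝ × ℝ × ℝ → ℝ)
    (hu : ContDiff ℝ 2 u) (hv : ContDiff ℝ 2 v) (hw : ContDiff ℝ 2 w)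
    (h : SolvesS Ψ d₁ d₂ d₂ k u v w Ω) :
    ∀ ε : ℝ,
      SolvesS Ψ d₁ d₂ d₂ k u v
        (fun p => Real.exp ε * w p + (Real.exp ε - 1) * v p) Ω := by
  intro ε p hp
  set a := Real.exp ε
  set b := Real.exp ε - 1
  have hwd : Differentiable ℝ w := hw.differentiable (by norm_num)
  have hvd : Differentiable ℝ v := hv.differentiable (by norm_num)
  have h1 : ∀ vv : ℝ × ℝ × ℝ,
      (fun p => fderiv ℝ (fun q => a * w q + b * v q) p vv)
        = fun p => a * fderiv ℝ w p vv + b * fderiv ℝ v p vv :=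
    fun vv => pd_lin w v a b hwd hvd vv
  have h2 : ∀ vv : ℝ × ℝ × ℝ,
      (fun p => fderiv ℝ (fun q => a * (fderiv ℝ w q vv) + b * (fderiv ℝ v q vv)) p vv)
        = fun p => a * fderiv ℝ (fun q => fderiv ℝ w q vv) p vv
            + b * fderiv ℝ (fun q => fderiv ℝ v q vv) p vv :=
    fun vv => pd_lin _ _ a b (diff_pd w hw vv) (diff_pd v hv vv) vv
  obtain ⟨hu', hv', hw'⟩ := h p hp
  refine ⟨hu', hv', ?_⟩
  have eT := congrFun (h1 (1,0,0)) p
  have eX := congrFun (h1 (0,1,0)) p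
  have eY := congrFun (h1 (0,0,1)) p
  have eXX : pdX (pdX (fun q => a * w q + b * v q)) p
      = a * pdX (pdX w) p + b * pdX (pdX v) p := by
    unfold pdX
    have : (fun q => fderiv ℝ (fun q => a * w q + b * v q) q (0,1,0))
        = fun q => a * fderiv ℝ w q (0,1,0) + b * fderiv ℝ v q (0,1,0) := h1 (0,1,0)
    rw [this]
    exact congrFun (h2 (0,1,0)) p
  have eYY : pdY (pdY (fun q => a * w q + b * v q)) p
      = a * pdY (pdY w) p + b * pdY (pdY v) p := by
    unfold pdY
    have : (fun q => fderiv ℝ (fun q => a * w q + b * v q) q (0,0,1))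
        = fun q => a * fderiv ℝ w q (0,0,1) + b * fderiv ℝ v q (0,0,1) := h1 (0,0,1)
    rw [this]
    exact congrFun (h2 (0,0,1)) p
  show pdT (fun q => a * w q + b * v q) p
      + psiY Ψ p.2 * pdX (fun q => a * w q + b * v q) p
      - psiX Ψ p.2 * pdY (fun q => a * w q + b * v q) p
      = d₂ * (pdX (pdX (fun q => a * w q + b * v q)) p
          + pdY (pdY (fun q => a * w q + b * v q)) p)
        + k * u p * v p
  have hab : a - b = 1 := by simp [a, b]
  unfold pdT pdX pdY at *
  rw [eT, eX, eY, eXX, eYY]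
  linear_combination a * hw' + b * hv' + (k * u p * v p) * hab
end

section
/- Coth-type exact solution of system (2-23) with equal diffusivities: Let d > 0 and α₁, α₂, C₂, C₃ be real constants; set C₁ = 10d(α₁² + α₂²) and θ(t,x,y) = C₁t + (α₁x + α₂y)·sin 2t + (α₁y − α₂x)·cos 2t. On the open set Ω = {(t,x,y) ∈ ℝ³ : θ(t,x,y) ≠ 0}, the functions u = (3C₁/5)·(1 + coth θ)², v = −12C₁/5 + u, w = C₂ + C₃·exp(10θ) − u satisfy system (2-23) with d₁ = d₂ = d₃ = d, i.e. u_t + 2y u_x − 2x u_y = d(u_xx + u_yy) − uv, v_t + 2y v_x − 2x v_y = d(v_xx + v_yy) − uv, w_t + 2y w_x − 2x w_y = d(w_xx + w_yy) + uv, at every point of Ω. -/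
/-- `(u,v,w)` solves system (2-23), the convective Lotka–Volterra system with
stream function `Ψ = x² + y²` and `k = 1`, on `Ω`. -/
def Solves223 (d₁ d₂ d₃ : ℝ) (u v w : ℝ × ℝ × ℝ → ℝ) (Ω : Set (ℝ × ℝ × ℝ)) : Prop :=
  ∀ p ∈ Ω,
    (pdT u p + 2 * p.2.2 * pdX u p - 2 * p.2.1 * pdY u p
      = d₁ * (pdX (pdX u) p + pdY (pdY u) p) - u p * v p) ∧
    (pdT v p + 2 * p.2.2 * pdX v p - 2 * p.2.1 * pdY v p
      = d₂ * (pdX (pdX v) p + pdY (pdY v) p) - u p * v p) ∧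
    (pdT w p + 2 * p.2.2 * pdX w p - 2 * p.2.1 * pdY w p
      = d₃ * (pdX (pdX w) p + pdY (pdY w) p) + u p * v p)

/-- The phase `θ(t,x,y) = C₁t + (α₁x + α₂y)·sin 2t + (α₁y − α₂x)·cos 2t`. -/
noncomputable def theta (α₁ α₂ C₁ : ℝ) (p : ℝ × ℝ × ℝ) : ℝ :=
  C₁ * p.1 + (α₁ * p.2.1 + α₂ * p.2.2) * Real.sin (2 * p.1)
    + (α₁ * p.2.2 - α₂ * p.2.1) * Real.cos (2 * p.1)

/-- `coth z = cosh z / sinh z`. -/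
noncomputable def coth (z : ℝ) : ℝ := Real.cosh z / Real.sinh z

open ContinuousLinearMap in
noncomputable def lin3 (a b c : ℝ) : ℝ × ℝ × ℝ →L[ℝ] ℝ :=
  a • (fst ℝ ℝ (ℝ × ℝ)) + b • ((fst ℝ ℝ ℝ).comp (snd ℝ ℝ (ℝ × ℝ)))
    + c • ((snd ℝ ℝ ℝ).comp (snd ℝ ℝ (ℝ × ℝ)))

@[simp] lemma lin3_apply (a b c : ℝ) (v : ℝ × ℝ × ℝ) :
    lin3 a b c v = a * v.1 + b * v.2.1 + c * v.2.2 := by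
  simp [lin3]

lemma hasFDerivAt_proj1 (p : ℝ × ℝ × ℝ) :
    HasFDerivAt (fun q : ℝ × ℝ × ℝ => q.1) (lin3 1 0 0) p := by
  refine hasFDerivAt_fst.congr_fderiv ?_
  apply ContinuousLinearMap.ext; intro v; simp

lemma hasFDerivAt_proj2 (p : ℝ × ℝ × ℝ) :
    HasFDerivAt (fun q : ℝ × ℝ × ℝ => q.2.1) (lin3 0 1 0) p := by
  have : HasFDerivAt (fun q : ℝ × ℝ × ℝ => q.2.1)
      ((ContinuousLinearMap.fst ℝ ℝ ℝ).comp (ContinuousLinearMap.snd ℝ ℝ (ℝ × ℝ))) p :=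
    hasFDerivAt_fst.comp p hasFDerivAt_snd
  convert this using 1
  apply ContinuousLinearMap.ext; intro v; simp

lemma hasFDerivAt_proj3 (p : ℝ × ℝ × ℝ) :
    HasFDerivAt (fun q : ℝ × ℝ × ℝ => q.2.2) (lin3 0 0 1) p := by
  have : HasFDerivAt (fun q : ℝ × ℝ × ℝ => q.2.2)
      ((ContinuousLinearMap.snd ℝ ℝ ℝ).comp (ContinuousLinearMap.snd ℝ ℝ (ℝ × ℝ))) p :=
    hasFDerivAt_snd.comp p hasFDerivAt_snd
  convert this using 1
  apply ContinuousLinearMap.ext; intro v; simp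

lemma hasFDerivAt_theta (α₁ α₂ C₁ : ℝ) (p : ℝ × ℝ × ℝ) :
    HasFDerivAt (theta α₁ α₂ C₁)
      (lin3 (C₁ + 2 * (α₁ * p.2.1 + α₂ * p.2.2) * Real.cos (2 * p.1)
              - 2 * (α₁ * p.2.2 - α₂ * p.2.1) * Real.sin (2 * p.1))
            (α₁ * Real.sin (2 * p.1) - α₂ * Real.cos (2 * p.1))
            (α₂ * Real.sin (2 * p.1) + α₁ * Real.cos (2 * p.1))) p := by
  have ht := hasFDerivAt_proj1 p
  have hx := hasFDerivAt_proj2 p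
  have hy := hasFDerivAt_proj3 p
  have h2t : HasFDerivAt (fun q : ℝ × ℝ × ℝ => 2 * q.1) (lin3 2 0 0) p := by
    have := ht.const_mul (2 : ℝ)
    refine this.congr_fderiv ?_
    apply ContinuousLinearMap.ext; intro v; simp
  have hsin : HasFDerivAt (fun q : ℝ × ℝ × ℝ => Real.sin (2 * q.1))
      ((Real.cos (2 * p.1)) • (lin3 2 0 0)) p :=
    (Real.hasDerivAt_sin (2 * p.1)).comp_hasFDerivAt (f := fun q : ℝ × ℝ × ℝ => 2 * q.1) p h2t
  have hcos : HasFDerivAt (fun q : ℝ × ℝ × ℝ => Real.cos (2 * q.1))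
      ((-Real.sin (2 * p.1)) • (lin3 2 0 0)) p :=
    (Real.hasDerivAt_cos (2 * p.1)).comp_hasFDerivAt (f := fun q : ℝ × ℝ × ℝ => 2 * q.1) p h2t
  have hbig := (((ht.const_mul C₁).add
      (((hx.const_mul α₁).add (hy.const_mul α₂)).mul hsin))).add
      (((hy.const_mul α₁).sub (hx.const_mul α₂)).mul hcos)
  refine hbig.congr_fderiv ?_
  apply ContinuousLinearMap.ext; intro v
  simp [lin3_apply]
  ring

lemma continuous_theta (α₁ α₂ C₁ : ℝ) : Continuous (theta α₁ α₂ C₁) := by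
  unfold theta; fun_prop

/-- Master lemma: for `f = g ∘ θ`, the convective LHS collapses to `g1(θ)·C₁`
and the Laplacian collapses to `g2(θ)·(α₁²+α₂²)`, at points where `θ ≠ 0`. -/
lemma key (α₁ α₂ C₁ : ℝ) (g g1 g2 : ℝ → ℝ)
    (hg : ∀ z, z ≠ 0 → HasDerivAt g (g1 z) z)
    (hg1 : ∀ z, z ≠ 0 → HasDerivAt g1 (g2 z) z)
    (p : ℝ × ℝ × ℝ) (hp : theta α₁ α₂ C₁ p ≠ 0) :
    (pdT (fun q => g (theta α₁ α₂ C₁ q)) p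
      + 2 * p.2.2 * pdX (fun q => g (theta α₁ α₂ C₁ q)) p
      - 2 * p.2.1 * pdY (fun q => g (theta α₁ α₂ C₁ q)) p
      = g1 (theta α₁ α₂ C₁ p) * C₁) ∧
    (pdX (pdX (fun q => g (theta α₁ α₂ C₁ q))) p
      + pdY (pdY (fun q => g (theta α₁ α₂ C₁ q))) p
      = g2 (theta α₁ α₂ C₁ p) * (α₁ ^ 2 + α₂ ^ 2)) := by
  set θ := theta α₁ α₂ C₁ with hθdef
  -- derivative of f = g ∘ θ at any point q of Ω
  have hf : ∀ q : ℝ × ℝ × ℝ, θ q ≠ 0 →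
      HasFDerivAt (fun q => g (θ q))
        ((g1 (θ q)) • (lin3 (C₁ + 2 * (α₁ * q.2.1 + α₂ * q.2.2) * Real.cos (2 * q.1)
              - 2 * (α₁ * q.2.2 - α₂ * q.2.1) * Real.sin (2 * q.1))
            (α₁ * Real.sin (2 * q.1) - α₂ * Real.cos (2 * q.1))
            (α₂ * Real.sin (2 * q.1) + α₁ * Real.cos (2 * q.1)))) q := by
    intro q hq
    exact (hg _ hq).comp_hasFDerivAt q (hasFDerivAt_theta α₁ α₂ C₁ q)
  have hΩ : {q : ℝ × ℝ × ℝ | θ q ≠ 0} ∈ nhds p := by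
    have : IsOpen {q : ℝ × ℝ × ℝ | θ q ≠ 0} :=
      isOpen_ne.preimage (continuous_theta α₁ α₂ C₁)
    exact this.mem_nhds hp
  constructor
  · have hfp := (hf p hp).fderiv
    simp only [pdT, pdX, pdY, hfp, ContinuousLinearMap.coe_smul', Pi.smul_apply,
      lin3_apply, smul_eq_mul]
    ring
  · -- pdX f agrees with explicit formula near p
    have hX : pdX (fun q => g (θ q)) =ᶠ[nhds p]
        (fun q => g1 (θ q) * (α₁ * Real.sin (2 * q.1) - α₂ * Real.cos (2 * q.1))) := by
      filter_upwards [hΩ] with q hq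
      simp only [pdX, (hf q hq).fderiv, ContinuousLinearMap.coe_smul', Pi.smul_apply,
        lin3_apply, smul_eq_mul]
      ring
    have hY : pdY (fun q => g (θ q)) =ᶠ[nhds p]
        (fun q => g1 (θ q) * (α₂ * Real.sin (2 * q.1) + α₁ * Real.cos (2 * q.1))) := by
      filter_upwards [hΩ] with q hq
      simp only [pdY, (hf q hq).fderiv, ContinuousLinearMap.coe_smul', Pi.smul_apply,
        lin3_apply, smul_eq_mul]
      ring
    -- derivative of g1 ∘ θ at p
    have hg1f : HasFDerivAt (fun q => g1 (θ q))
        ((g2 (θ p)) • (lin3 (C₁ + 2 * (α₁ * p.2.1 + α₂ * p.2.2) * Real.cos (2 * p.1)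
              - 2 * (α₁ * p.2.2 - α₂ * p.2.1) * Real.sin (2 * p.1))
            (α₁ * Real.sin (2 * p.1) - α₂ * Real.cos (2 * p.1))
            (α₂ * Real.sin (2 * p.1) + α₁ * Real.cos (2 * p.1)))) p :=
      (hg1 _ hp).comp_hasFDerivAt p (hasFDerivAt_theta α₁ α₂ C₁ p)
    have h2t : HasFDerivAt (fun q : ℝ × ℝ × ℝ => 2 * q.1) (lin3 2 0 0) p := by
      have := (hasFDerivAt_proj1 p).const_mul (2 : ℝ)
      refine this.congr_fderiv ?_
      apply ContinuousLinearMap.ext; intro v; simp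
    have hsin : HasFDerivAt (fun q : ℝ × ℝ × ℝ => Real.sin (2 * q.1))
        ((Real.cos (2 * p.1)) • (lin3 2 0 0)) p :=
      (Real.hasDerivAt_sin (2 * p.1)).comp_hasFDerivAt (f := fun q : ℝ × ℝ × ℝ => 2 * q.1) p h2t
    have hcos : HasFDerivAt (fun q : ℝ × ℝ × ℝ => Real.cos (2 * q.1))
        ((-Real.sin (2 * p.1)) • (lin3 2 0 0)) p :=
      (Real.hasDerivAt_cos (2 * p.1)).comp_hasFDerivAt (f := fun q : ℝ × ℝ × ℝ => 2 * q.1) p h2t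
    have hA : HasFDerivAt (fun q : ℝ × ℝ × ℝ =>
        α₁ * Real.sin (2 * q.1) - α₂ * Real.cos (2 * q.1))
        ((α₁ • ((Real.cos (2 * p.1)) • (lin3 2 0 0)))
          - (α₂ • ((-Real.sin (2 * p.1)) • (lin3 2 0 0)))) p :=
      (hsin.const_mul α₁).sub (hcos.const_mul α₂)
    have hB : HasFDerivAt (fun q : ℝ × ℝ × ℝ =>
        α₂ * Real.sin (2 * q.1) + α₁ * Real.cos (2 * q.1))
        ((α₂ • ((Real.cos (2 * p.1)) • (lin3 2 0 0)))
          + (α₁ • ((-Real.sin (2 * p.1)) • (lin3 2 0 0)))) p :=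
      (hsin.const_mul α₂).add (hcos.const_mul α₁)
    have hXX : pdX (pdX (fun q => g (θ q))) p
        = g2 (θ p) * (α₁ * Real.sin (2 * p.1) - α₂ * Real.cos (2 * p.1)) ^ 2 := by
      have this : fderiv ℝ (fun q => g1 (θ q) * (α₁ * Real.sin (2 * q.1) - α₂ * Real.cos (2 * q.1))) p = _ :=
        (hg1f.mul hA).fderiv
      simp only [pdX, hX.fderiv_eq, this, ContinuousLinearMap.add_apply,
        ContinuousLinearMap.coe_smul', Pi.smul_apply, ContinuousLinearMap.sub_apply,
        lin3_apply, smul_eq_mul]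
      ring
    have hYY : pdY (pdY (fun q => g (θ q))) p
        = g2 (θ p) * (α₂ * Real.sin (2 * p.1) + α₁ * Real.cos (2 * p.1)) ^ 2 := by
      have this : fderiv ℝ (fun q => g1 (θ q) * (α₂ * Real.sin (2 * q.1) + α₁ * Real.cos (2 * q.1))) p = _ :=
        (hg1f.mul hB).fderiv
      simp only [pdY, hY.fderiv_eq, this, ContinuousLinearMap.add_apply,
        ContinuousLinearMap.coe_smul', Pi.smul_apply, ContinuousLinearMap.sub_apply,
        lin3_apply, smul_eq_mul]
      ring
    rw [hXX, hYY]
    have hsc := Real.sin_sq_add_cos_sq (2 * p.1)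
    linear_combination g2 (θ p) * (α₁ ^ 2 + α₂ ^ 2) * hsc
lemma hasDerivAt_coth {z : ℝ} (hz : z ≠ 0) :
    HasDerivAt coth (1 - coth z ^ 2) z := by
  have hs : Real.sinh z ≠ 0 := Real.sinh_ne_zero.2 hz
  have h := (Real.hasDerivAt_cosh z).div (Real.hasDerivAt_sinh z) hs
  refine h.congr_deriv ?_
  unfold coth
  field_simp

/-- Coth-type exact solution of system (2-23) with `d₁ = d₂ = d₃ = d`:
with `C₁ = 10d(α₁²+α₂²)`, the functions `u = (3C₁/5)(1 + coth θ)²`,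
`v = −12C₁/5 + u`, `w = C₂ + C₃e^{10θ} − u` solve (2-23) on `Ω = {θ ≠ 0}`. -/
theorem coth_exact_solution
    (d α₁ α₂ C₂ C₃ : ℝ) (hd : 0 < d) :
    Solves223 d d d
      (fun p => (3 * (10 * d * (α₁ ^ 2 + α₂ ^ 2)) / 5) *
        (1 + coth (theta α₁ α₂ (10 * d * (α₁ ^ 2 + α₂ ^ 2)) p)) ^ 2)
      (fun p => -(12 * (10 * d * (α₁ ^ 2 + α₂ ^ 2)) / 5)
        + (3 * (10 * d * (α₁ ^ 2 + α₂ ^ 2)) / 5) *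
          (1 + coth (theta α₁ α₂ (10 * d * (α₁ ^ 2 + α₂ ^ 2)) p)) ^ 2)
      (fun p => C₂ + C₃ * Real.exp (10 * theta α₁ α₂ (10 * d * (α₁ ^ 2 + α₂ ^ 2)) p)
        - (3 * (10 * d * (α₁ ^ 2 + α₂ ^ 2)) / 5) *
          (1 + coth (theta α₁ α₂ (10 * d * (α₁ ^ 2 + α₂ ^ 2)) p)) ^ 2)
      {p : ℝ × ℝ × ℝ | theta α₁ α₂ (10 * d * (α₁ ^ 2 + α₂ ^ 2)) p ≠ 0} := by
  intro p hp
  simp only [Set.mem_setOf_eq] at hp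
  set C1 : ℝ := 10 * d * (α₁ ^ 2 + α₂ ^ 2) with hC1
  -- derivative facts for the profile functions
  have hcoth1 : ∀ z : ℝ, z ≠ 0 →
      HasDerivAt (fun z => (1 + coth z) ^ 2) (2 * (1 + coth z) * (1 - coth z ^ 2)) z := by
    intro z hz
    have h := ((hasDerivAt_coth hz).const_add 1).pow 2
    refine h.congr_deriv ?_
    push_cast
    ring
  have hgu : ∀ z : ℝ, z ≠ 0 →
      HasDerivAt (fun z => 3 * C1 / 5 * (1 + coth z) ^ 2)
        ((fun z => 6 * C1 / 5 * ((1 + coth z) ^ 2 * (1 - coth z))) z) z := by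
    intro z hz
    have h := (hcoth1 z hz).const_mul (3 * C1 / 5)
    refine h.congr_deriv ?_
    have hs : Real.sinh z ≠ 0 := Real.sinh_ne_zero.2 hz
    have hh : coth z ^ 2 - 1 = (coth z - 1) * (coth z + 1) := by ring
    ring
  have hgu1 : ∀ z : ℝ, z ≠ 0 →
      HasDerivAt (fun z => 6 * C1 / 5 * ((1 + coth z) ^ 2 * (1 - coth z)))
        ((fun z => 6 * C1 / 5 * ((1 + coth z) ^ 2 * ((1 - coth z) * (1 - 3 * coth z)))) z) z := by
    intro z hz
    have h1 := (hasDerivAt_coth hz).const_add 1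
    have h2 := (hasDerivAt_coth hz).const_sub 1
    have h := ((h1.pow 2).mul h2).const_mul (6 * C1 / 5)
    refine h.congr_deriv ?_
    push_cast
    simp only [Pi.pow_apply]
    ring
  -- u and v equations
  have hu := key α₁ α₂ C1 (fun z => 3 * C1 / 5 * (1 + coth z) ^ 2)
    (fun z => 6 * C1 / 5 * ((1 + coth z) ^ 2 * (1 - coth z)))
    (fun z => 6 * C1 / 5 * ((1 + coth z) ^ 2 * ((1 - coth z) * (1 - 3 * coth z))))
    hgu hgu1 p hp
  have hv := key α₁ α₂ C1 (fun z => -(12 * C1 / 5) + 3 * C1 / 5 * (1 + coth z) ^ 2)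
    (fun z => 6 * C1 / 5 * ((1 + coth z) ^ 2 * (1 - coth z)))
    (fun z => 6 * C1 / 5 * ((1 + coth z) ^ 2 * ((1 - coth z) * (1 - 3 * coth z))))
    (fun z hz => (hgu z hz).const_add _) hgu1 p hp
  have hw := key α₁ α₂ C1
    (fun z => C₂ + C₃ * Real.exp (10 * z) - 3 * C1 / 5 * (1 + coth z) ^ 2)
    (fun z => C₃ * Real.exp (10 * z) * 10 - 6 * C1 / 5 * ((1 + coth z) ^ 2 * (1 - coth z)))
    (fun z => C₃ * Real.exp (10 * z) * 10 * 10
      - 6 * C1 / 5 * ((1 + coth z) ^ 2 * ((1 - coth z) * (1 - 3 * coth z))))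
    (fun z hz => by
      have hexp : HasDerivAt (fun z : ℝ => Real.exp (10 * z)) (Real.exp (10 * z) * 10) z :=
        by simpa using ((hasDerivAt_id z).const_mul 10).exp
      have h := (((hexp.const_mul C₃).const_add C₂).sub (hgu z hz))
      refine h.congr_deriv ?_
      ring)
    (fun z hz => by
      have hexp : HasDerivAt (fun z : ℝ => Real.exp (10 * z)) (Real.exp (10 * z) * 10) z :=
        by simpa using ((hasDerivAt_id z).const_mul 10).exp
      have h := ((hexp.const_mul C₃).mul_const 10).sub (hgu1 z hz)
      refine h.congr_deriv ?_
      ring)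
    p hp
  obtain ⟨hu1, hu2⟩ := hu
  obtain ⟨hv1, hv2⟩ := hv
  obtain ⟨hw1, hw2⟩ := hw
  refine ⟨?_, ?_, ?_⟩
  · rw [hu1, hu2]
    set H := coth (theta α₁ α₂ C1 p) with hH
    rw [hC1]; ring
  · rw [hv1, hv2]
    set H := coth (theta α₁ α₂ C1 p) with hH
    rw [hC1]; ring
  · rw [hw1, hw2]
    set H := coth (theta α₁ α₂ C1 p) with hH
    set Ex := Real.exp (10 * theta α₁ α₂ C1 p) with hEx
    rw [hC1]; ring
end
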